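/- Let $k = 2$ and $p = \log_2 6$. For all nonnegative reals $a, b$: $a^p + 4 a^{p/2} b^{p/2} + b^p \leq (a+b)^p$. -/

import Mathlib

open Real Set

/-- Bernoulli's inequality for exponents in `[-1, 0]`. -/
private lemma bernoulli_neg {x q : ℝ} (hx : 0 ≤ x) (hq1 : -1 ≤ q) (hq2 : q ≤ 0) :
    1 + q * x ≤ (1 + x) ^ q := by
  have hx1 : (0:ℝ) < 1 + x := by linarith
  rcases le_or_gt (1 + q * x) 0 with h | h
  · exact h.trans (Real.rpow_pos_of_pos hx1 q).le
  · have hA : (0:ℝ) < (1 + x) ^ (-q) := Real.rpow_pos_of_pos hx1 _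
    have hAle : (1 + x) ^ (-q) ≤ 1 + (-q) * x :=
      rpow_one_add_le_one_add_mul_self (by linarith : (-1:ℝ) ≤ x)
        (by linarith) (by linarith)
    have hq' : (1 + x) ^ q = ((1 + x) ^ (-q))⁻¹ := by
      rw [← Real.rpow_neg hx1.le, neg_neg]
    have h2 : (1 + q * x) * ((1 + x) ^ (-q)) ≤ 1 := by
      nlinarith [mul_le_mul_of_nonneg_left hAle h.le, sq_nonneg (q*x)]
    rw [hq']
    calc 1 + q * x = (1 + q * x) * ((1 + x) ^ (-q)) * ((1 + x) ^ (-q))⁻¹ := by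
          field_simp
      _ ≤ 1 * ((1 + x) ^ (-q))⁻¹ := by
          exact mul_le_mul_of_nonneg_right h2 (inv_nonneg.2 hA.le)
      _ = ((1 + x) ^ (-q))⁻¹ := one_mul _

private noncomputable def F (p t : ℝ) : ℝ := (1+t)^p - 1 - 4*t^(p/2) - t^p
private noncomputable def F1 (p t : ℝ) : ℝ :=
  p*(1+t)^(p-1) - 2*p*t^(p/2-1) - p*t^(p-1)
private noncomputable def F2 (p t : ℝ) : ℝ :=
  p*(p-1)*(1+t)^(p-2) - p*(p-2)*t^(p/2-2) - p*(p-1)*t^(p-2)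
private noncomputable def F3 (p t : ℝ) : ℝ :=
  p*(p-1)*(p-2)*(1+t)^(p-3) - p*(p-2)*(p/2-2)*t^(p/2-3) - p*(p-1)*(p-2)*t^(p-3)

private lemma hasDerivAt_one_add {t q : ℝ} (ht : 0 ≤ t) :
    HasDerivAt (fun x : ℝ => (1+x)^q) (q*(1+t)^(q-1)) t := by
  have h : HasDerivAt (fun x : ℝ => 1 + x) 1 t := (hasDerivAt_id t).const_add 1
  have := h.rpow_const (p := q) (Or.inl (by positivity))
  simpa using this

private lemma hasDerivAt_F {p t : ℝ} (ht : 0 < t) : HasDerivAt (F p) (F1 p t) t := by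
  have h1 : HasDerivAt (fun x : ℝ => (1+x)^p) (p*(1+t)^(p-1)) t := hasDerivAt_one_add ht.le
  have h2 : HasDerivAt (fun x : ℝ => x^(p/2)) ((p/2)*t^(p/2-1)) t :=
    Real.hasDerivAt_rpow_const (Or.inl ht.ne')
  have h3 : HasDerivAt (fun x : ℝ => x^p) (p*t^(p-1)) t :=
    Real.hasDerivAt_rpow_const (Or.inl ht.ne')
  have := ((h1.sub_const 1).sub (h2.const_mul 4)).sub h3
  refine this.congr_deriv ?_
  unfold F1; ring

private lemma hasDerivAt_F1 {p t : ℝ} (ht : 0 < t) : HasDerivAt (F1 p) (F2 p t) t := by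
  have h1 : HasDerivAt (fun x : ℝ => (1+x)^(p-1)) ((p-1)*(1+t)^(p-1-1)) t :=
    hasDerivAt_one_add ht.le
  have h2 : HasDerivAt (fun x : ℝ => x^(p/2-1)) ((p/2-1)*t^(p/2-1-1)) t :=
    Real.hasDerivAt_rpow_const (Or.inl ht.ne')
  have h3 : HasDerivAt (fun x : ℝ => x^(p-1)) ((p-1)*t^(p-1-1)) t :=
    Real.hasDerivAt_rpow_const (Or.inl ht.ne')
  have := ((h1.const_mul p).sub (h2.const_mul (2*p))).sub (h3.const_mul p)
  refine this.congr_deriv ?_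
  unfold F2
  rw [show p-1-1 = p-2 by ring, show p/2-1-1 = p/2-2 by ring]
  ring

private lemma hasDerivAt_F2 {p t : ℝ} (ht : 0 < t) : HasDerivAt (F2 p) (F3 p t) t := by
  have h1 : HasDerivAt (fun x : ℝ => (1+x)^(p-2)) ((p-2)*(1+t)^(p-2-1)) t :=
    hasDerivAt_one_add ht.le
  have h2 : HasDerivAt (fun x : ℝ => x^(p/2-2)) ((p/2-2)*t^(p/2-2-1)) t :=
    Real.hasDerivAt_rpow_const (Or.inl ht.ne')
  have h3 : HasDerivAt (fun x : ℝ => x^(p-2)) ((p-2)*t^(p-2-1)) t :=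
    Real.hasDerivAt_rpow_const (Or.inl ht.ne')
  have := ((h1.const_mul (p*(p-1))).sub (h2.const_mul (p*(p-2)))).sub
    (h3.const_mul (p*(p-1)))
  refine this.congr_deriv ?_
  unfold F3
  rw [show p-2-1 = p-3 by ring, show p/2-2-1 = p/2-3 by ring]
  ring

private lemma F3_nonneg {p t : ℝ} (hp52 : 5/2 ≤ p) (hp3 : p < 3)
    (ht : 0 < t) (ht1 : t ≤ 1) : 0 ≤ F3 p t := by
  have hp2 : (2:ℝ) < p := by linarith
  -- Bernoulli: (1+t)^(p-3) ≥ t^(p-3) + (p-3) * t^(p-4)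
  have hbern : t^(p-3) + (p-3) * t^(p-4) ≤ (1+t)^(p-3) := by
    have hx : (0:ℝ) ≤ 1/t := by positivity
    have hB : 1 + (p-3) * (1/t) ≤ (1 + 1/t) ^ (p-3) :=
      bernoulli_neg hx (by linarith) (by linarith)
    have hts : (1+t) = t * (1 + 1/t) := by field_simp; ring
    have h1 : (1+t)^(p-3) = t^(p-3) * (1 + 1/t)^(p-3) := by
      rw [hts, Real.mul_rpow ht.le (by positivity)]
    have h2 : t^(p-3) * (1 + (p-3) * (1/t)) ≤ t^(p-3) * (1 + 1/t)^(p-3) :=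
      mul_le_mul_of_nonneg_left hB (Real.rpow_nonneg ht.le _)
    have h3 : t^(p-3) * (1/t) = t^(p-4) := by
      rw [show p-4 = (p-3) + (-1) by ring, Real.rpow_add ht, Real.rpow_neg_one]
      field_simp
    calc t^(p-3) + (p-3) * t^(p-4) = t^(p-3) * (1 + (p-3) * (1/t)) := by
          rw [mul_add, mul_one, ← mul_assoc, mul_comm (t^(p-3)) (p-3), mul_assoc, h3]
      _ ≤ t^(p-3) * (1 + 1/t)^(p-3) := h2
      _ = (1+t)^(p-3) := h1.symm
  have hAB : t^(p-4) ≤ t^(p/2-3) :=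
    Real.rpow_le_rpow_of_exponent_ge ht ht1 (by linarith)
  have hA : (0:ℝ) ≤ t^(p-4) := Real.rpow_nonneg ht.le _
  have hBpos : (0:ℝ) ≤ t^(p/2-3) := Real.rpow_nonneg ht.le _
  have hP : (0:ℝ) < p*(p-1)*(p-2) :=
    mul_pos (mul_pos (by linarith : (0:ℝ) < p) (by linarith : (0:ℝ) < p-1))
      (by linarith : (0:ℝ) < p-2)
  have key1 : p*(p-1)*(p-2)*((p-3)*t^(p-4)) ≤ p*(p-1)*(p-2)*((1+t)^(p-3) - t^(p-3)) :=
    mul_le_mul_of_nonneg_left (by linarith) hP.le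
  have key2 : (p*(p-1)*(p-2)*(3-p))*t^(p-4) ≤ (p*(p-1)*(p-2)*(3-p))*t^(p/2-3) :=
    mul_le_mul_of_nonneg_left hAB (mul_nonneg hP.le (by linarith))
  have key3 : 0 ≤ (p*(p-2)*((p-2)*(p-5/2))) * t^(p/2-3) :=
    mul_nonneg (mul_nonneg (mul_nonneg (by linarith) (by linarith))
      (mul_nonneg (by linarith) (by linarith))) hBpos
  unfold F3
  nlinarith [key1, key2, key3]

private lemma F2_mono {p : ℝ} (hp52 : 5/2 ≤ p) (hp3 : p < 3) :
    MonotoneOn (F2 p) (Ioc (0:ℝ) 1) := by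
  apply monotoneOn_of_deriv_nonneg (convex_Ioc 0 1)
  · intro x hx
    exact ((hasDerivAt_F2 hx.1).continuousAt).continuousWithinAt
  · intro x hx
    rw [interior_Ioc] at hx
    exact ((hasDerivAt_F2 hx.1).differentiableAt).differentiableWithinAt
  · intro x hx
    rw [interior_Ioc] at hx
    rw [(hasDerivAt_F2 hx.1).deriv]
    exact F3_nonneg hp52 hp3 hx.1 hx.2.le

private lemma contF1 {p : ℝ} (hp52 : 5/2 ≤ p) (hp3 : p < 3) :
    ContinuousOn (F1 p) (Icc (0:ℝ) 1) := by
  have hp2 : (2:ℝ) < p := by linarith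
  intro x hx
  have c1 : ContinuousAt (fun t : ℝ => (1+t)^(p-1)) x := by
    have := (Real.continuousAt_rpow_const (1+x) (p-1) (Or.inr (by linarith))).comp
      (by fun_prop : ContinuousAt (fun t : ℝ => 1 + t) x)
    exact this
  have c2 : ContinuousAt (fun t : ℝ => t^(p/2-1)) x :=
    Real.continuousAt_rpow_const x _ (Or.inr (by linarith))
  have c3 : ContinuousAt (fun t : ℝ => t^(p-1)) x :=
    Real.continuousAt_rpow_const x _ (Or.inr (by linarith))
  have hc : ContinuousAt (F1 p) x := by
    unfold F1
    exact ((c1.const_mul p).sub (c2.const_mul (2*p))).sub (c3.const_mul p)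
  exact hc.continuousWithinAt

private lemma F1_convex {p : ℝ} (hp52 : 5/2 ≤ p) (hp3 : p < 3) :
    ConvexOn ℝ (Icc (0:ℝ) 1) (F1 p) := by
  apply MonotoneOn.convexOn_of_deriv (convex_Icc 0 1) (contF1 hp52 hp3)
  · intro x hx
    rw [interior_Icc] at hx
    exact ((hasDerivAt_F1 hx.1).differentiableAt).differentiableWithinAt
  · intro x hx y hy hxy
    rw [interior_Icc] at hx hy
    rw [(hasDerivAt_F1 hx.1).deriv, (hasDerivAt_F1 hy.1).deriv]
    exact F2_mono hp52 hp3 ⟨hx.1, hx.2.le⟩ ⟨hy.1, hy.2.le⟩ hxy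

private lemma contF {p : ℝ} (hp52 : 5/2 ≤ p) (hp3 : p < 3) :
    ContinuousOn (F p) (Icc (0:ℝ) 1) := by
  have hp2 : (2:ℝ) < p := by linarith
  intro x hx
  have c1 : ContinuousAt (fun t : ℝ => (1+t)^p) x := by
    exact (Real.continuousAt_rpow_const (1+x) p (Or.inr (by linarith))).comp
      (by fun_prop : ContinuousAt (fun t : ℝ => 1 + t) x)
  have c2 : ContinuousAt (fun t : ℝ => t^(p/2)) x :=
    Real.continuousAt_rpow_const x _ (Or.inr (by linarith))
  have c3 : ContinuousAt (fun t : ℝ => t^p) x :=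
    Real.continuousAt_rpow_const x _ (Or.inr (by linarith))
  have hc : ContinuousAt (F p) x := by
    unfold F
    exact ((c1.sub continuousAt_const).sub (c2.const_mul 4)).sub c3
  exact hc.continuousWithinAt

private lemma F1_one {p : ℝ} (h2p : (2:ℝ)^p = 6) : F1 p 1 = 0 := by
  unfold F1
  have h : (1:ℝ) + 1 = 2 := by norm_num
  have h2 : (2:ℝ)^(p-1) = 3 := by
    rw [Real.rpow_sub (by norm_num : (0:ℝ) < 2), h2p, Real.rpow_one]; norm_num
  rw [h, h2, Real.one_rpow, Real.one_rpow]
  ring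

private lemma F_zero {p : ℝ} (hp : 2 < p) : F p 0 = 0 := by
  unfold F
  rw [Real.zero_rpow (by positivity : p/2 ≠ 0), Real.zero_rpow (by positivity : p ≠ 0)]
  norm_num

private lemma F_one {p : ℝ} (h2p : (2:ℝ)^p = 6) : F p 1 = 0 := by
  unfold F
  have h : (1:ℝ) + 1 = 2 := by norm_num
  rw [h, h2p, Real.one_rpow, Real.one_rpow]
  ring

private lemma F_nonneg {p : ℝ} (hp52 : 5/2 ≤ p) (hp3 : p < 3) (h2p : (2:ℝ)^p = 6)
    {x : ℝ} (hx0 : 0 ≤ x) (hx1 : x ≤ 1) : 0 ≤ F p x := by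
  have hp2 : (2:ℝ) < p := by linarith
  by_cases hneg : ∃ s, s ∈ Ioo (0:ℝ) x ∧ F1 p s < 0
  · obtain ⟨s, hs, hFs⟩ := hneg
    have hxpos : 0 < x := hs.1.trans hs.2
    -- F1 ≤ 0 on [x, 1]
    have hF1le : ∀ y ∈ Ioo x 1, F1 p y ≤ 0 := by
      intro y hy
      have hmem : y ∈ Icc s 1 := ⟨(hs.2.trans hy.1).le, hy.2.le⟩
      have := (F1_convex hp52 hp3).le_max_of_mem_Icc
        (x := s) (y := 1)
        ⟨hs.1.le, by linarith [hs.2]⟩ ⟨by norm_num, le_refl 1⟩ hmem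
      rw [F1_one h2p] at this
      calc F1 p y ≤ max (F1 p s) 0 := this
        _ ≤ 0 := max_le hFs.le le_rfl
    have hanti : AntitoneOn (F p) (Icc x 1) := by
      apply antitoneOn_of_deriv_nonpos (convex_Icc x 1)
        ((contF hp52 hp3).mono (Icc_subset_Icc hx0 le_rfl))
      · intro y hy
        rw [interior_Icc] at hy
        exact ((hasDerivAt_F (hxpos.trans hy.1)).differentiableAt).differentiableWithinAt
      · intro y hy
        rw [interior_Icc] at hy
        rw [(hasDerivAt_F (hxpos.trans hy.1)).deriv]
        exact hF1le y hy
    have := hanti ⟨le_refl x, hx1⟩ ⟨hx1, le_refl 1⟩ hx1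
    rw [F_one h2p] at this
    exact this
  · push_neg at hneg
    have hmono : MonotoneOn (F p) (Icc 0 x) := by
      apply monotoneOn_of_deriv_nonneg (convex_Icc 0 x)
        ((contF hp52 hp3).mono (Icc_subset_Icc le_rfl hx1))
      · intro y hy
        rw [interior_Icc] at hy
        exact ((hasDerivAt_F hy.1).differentiableAt).differentiableWithinAt
      · intro y hy
        rw [interior_Icc] at hy
        rw [(hasDerivAt_F hy.1).deriv]
        exact hneg y hy
    have := hmono ⟨le_refl 0, hx0⟩ ⟨hx0, le_refl x⟩ hx0
    rw [F_zero hp2] at this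
    exact this

private lemma one_var {p : ℝ} (hp52 : 5/2 ≤ p) (hp3 : p < 3) (h2p : (2:ℝ)^p = 6)
    {t : ℝ} (ht0 : 0 ≤ t) (ht1 : t ≤ 1) :
    1 + 4*t^(p/2) + t^p ≤ (1+t)^p := by
  have := F_nonneg hp52 hp3 h2p ht0 ht1
  unfold F at this
  linarith

theorem legendre_ineq_k2 (a b : ℝ) (ha : 0 ≤ a) (hb : 0 ≤ b) :
    a ^ (Real.logb 2 6) + 4 * a ^ (Real.logb 2 6 / 2) * b ^ (Real.logb 2 6 / 2)
      + b ^ (Real.logb 2 6)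
      ≤ (a + b) ^ (Real.logb 2 6) := by
  set p := Real.logb 2 6 with hpdef
  have h2p : (2:ℝ)^p = 6 :=
    Real.rpow_logb (by norm_num) (by norm_num) (by norm_num)
  have hp52 : 5/2 ≤ p := by
    rw [hpdef, Real.le_logb_iff_rpow_le (by norm_num) (by norm_num)]
    have h32 : ((2:ℝ)^((5:ℝ)/2))^(2:ℕ) = 32 := by
      rw [← Real.rpow_natCast ((2:ℝ)^((5:ℝ)/2)) 2, ← Real.rpow_mul (by norm_num)]
      norm_num
    nlinarith [Real.rpow_pos_of_pos (show (0:ℝ) < 2 by norm_num) ((5:ℝ)/2)]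
  have hp3 : p < 3 := by
    rw [hpdef, Real.logb_lt_iff_lt_rpow (by norm_num) (by norm_num)]
    rw [show (3:ℝ) = ((3:ℕ):ℝ) by norm_num, Real.rpow_natCast]
    norm_num
  have hp2 : (2:ℝ) < p := by linarith
  have key : ∀ u v : ℝ, 0 ≤ u → 0 ≤ v → v ≤ u →
      u^p + 4 * u^(p/2) * v^(p/2) + v^p ≤ (u+v)^p := by
    intro u v hu hv hvu
    rcases eq_or_lt_of_le hu with h | hupos
    · have hv0 : v = 0 := le_antisymm (hvu.trans h.symm.le) hv
      rw [← h, hv0]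
      have hpne : p ≠ 0 := (by linarith : (0:ℝ) < p).ne'
      have hpne2 : p/2 ≠ 0 := (by linarith : (0:ℝ) < p/2).ne'
      norm_num [Real.zero_rpow hpne, Real.zero_rpow hpne2]
    · set t := v / u with htdef
      have ht0 : 0 ≤ t := by positivity
      have ht1 : t ≤ 1 := by rw [htdef, div_le_one hupos]; exact hvu
      have hvt : v = u * t := by rw [htdef]; field_simp
      have main := one_var hp52 hp3 h2p ht0 ht1
      have hup : (0:ℝ) < u^p := Real.rpow_pos_of_pos hupos p
      have e1 : v^p = u^p * t^p := by rw [hvt, Real.mul_rpow hu ht0]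
      have e2 : u^(p/2) * v^(p/2) = u^p * t^(p/2) := by
        rw [hvt, Real.mul_rpow hu ht0, ← mul_assoc, ← Real.rpow_add hupos]
        rw [show p/2 + p/2 = p by ring]
      have e3 : (u+v)^p = u^p * (1+t)^p := by
        rw [hvt, show u + u*t = u*(1+t) by ring, Real.mul_rpow hu (by linarith)]
      have e2' : 4 * u^(p/2) * v^(p/2) = 4*(u^p * t^(p/2)) := by
        rw [mul_assoc, e2]
      rw [e1, e2', e3]
      calc u^p + 4 * (u^p * t^(p/2)) + u^p * t^p
          = u^p * (1 + 4*t^(p/2) + t^p) := by ring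
        _ ≤ u^p * (1+t)^p := mul_le_mul_of_nonneg_left main hup.le
  rcases le_total b a with h | h
  · exact key a b ha hb h
  · have := key b a hb ha h
    calc a ^ p + 4 * a ^ (p/2) * b ^ (p/2) + b ^ p
        = b^p + 4 * b^(p/2) * a^(p/2) + a^p := by ring
      _ ≤ (b+a)^p := this
      _ = (a+b)^p := by rw [add_comm]
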